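/- Let S = {(R,m,t) ∈ (ℕ →₀ ℕ) × ℤ × ℤ : m ≠ 0 and R i = 0 for every i < v₂(m)} (the monomials that are sources of Tate differentials) and T = {(R,m,t) : R ≠ 0 and 2^(min(R)+1) divides m} (the monomials that are targets). Then: (i) S and T are disjoint; (ii) S ∪ T consists of all triples (R,m,t) except those with R = 0 and m = 0; (iii) Φ restricts to a bijection from S onto T, with inverse given by (R,m,t) ↦ (R − e_{min(R)}, m − 2^(min(R)), t − 2^(min(R)+1) + 1); (iv) Φ decreases the integer degree Σ_i (R i)·(2^i − 1) − m by exactly 1 and preserves the quantity Σ_i (R i)·(2^i − 1) + m − t. (Consequently the only monomials surviving the Tate spectral sequence for BPℝ are the powers of a.) -/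

import Mathlib

/-!
Monomials `v_R σ^m a^t` in the E₁-term `BP_*[σ, σ⁻¹, a, a⁻¹]` of the Tate
spectral sequence for Landweber's Real Brown–Peterson spectrum `BPℝ` are
encoded by triples `(R, m, t) ∈ (ℕ →₀ ℕ) × ℤ × ℤ`.
-/

/-- The 2-adic valuation of an integer. -/
noncomputable def v2 (m : ℤ) : ℕ := padicValInt 2 m

/-- `min R`: the least `i` with `R i ≠ 0` (for `R ≠ 0`). -/
noncomputable def minR (R : ℕ →₀ ℕ) : ℕ := sInf {i | R i ≠ 0}

/-- The Tate differential on monomials: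
`Φ(R, m, t) = (R + e_{v₂(m)}, m + 2^(v₂(m)), t + 2^(v₂(m)+1) − 1)`. -/
noncomputable def Φ : (ℕ →₀ ℕ) × ℤ × ℤ → (ℕ →₀ ℕ) × ℤ × ℤ := fun x =>
  (x.1 + Finsupp.single (v2 x.2.1) 1,
   x.2.1 + 2 ^ v2 x.2.1,
   x.2.2 + 2 ^ (v2 x.2.1 + 1) - 1)

/-- The claimed inverse of `Φ`:
`Ψ(R, m, t) = (R − e_{min(R)}, m − 2^(min(R)), t − 2^(min(R)+1) + 1)`. -/
noncomputable def Ψ : (ℕ →₀ ℕ) × ℤ × ℤ → (ℕ →₀ ℕ) × ℤ × ℤ := fun x =>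
  (x.1 - Finsupp.single (minR x.1) 1,
   x.2.1 - 2 ^ minR x.1,
   x.2.2 - 2 ^ (minR x.1 + 1) + 1)

/-- The integer degree `Σ_i (R i)·(2^i − 1) − m` of the monomial `(R, m, t)`. -/
noncomputable def deg (x : (ℕ →₀ ℕ) × ℤ × ℤ) : ℤ :=
  x.1.sum (fun i r => (r : ℤ) * (2 ^ i - 1)) - x.2.1

/-- The quantity `Σ_i (R i)·(2^i − 1) + m − t`. -/
noncomputable def qdeg (x : (ℕ →₀ ℕ) × ℤ × ℤ) : ℤ :=
  x.1.sum (fun i r => (r : ℤ) * (2 ^ i - 1)) + x.2.1 - x.2.2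

/-- The sources of Tate differentials: `m ≠ 0` and `R i = 0` for `i < v₂(m)`. -/
def S : Set ((ℕ →₀ ℕ) × ℤ × ℤ) :=
  {x | x.2.1 ≠ 0 ∧ ∀ i < v2 x.2.1, x.1 i = 0}

/-- The targets of Tate differentials: `R ≠ 0` and `2^(min(R)+1) ∣ m`. -/
def T : Set ((ℕ →₀ ℕ) × ℤ × ℤ) :=
  {x | x.1 ≠ 0 ∧ (2 : ℤ) ^ (minR x.1 + 1) ∣ x.2.1}

lemma two_cast : ((2:ℕ):ℤ) = 2 := by norm_num

lemma v2_dvd (m : ℤ) : (2:ℤ) ^ v2 m ∣ m := by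
  haveI : Fact (Nat.Prime 2) := ⟨Nat.prime_two⟩
  have := padicValInt_dvd (p := 2) m
  rwa [two_cast] at this

lemma v2_not_dvd {m : ℤ} (hm : m ≠ 0) : ¬ (2:ℤ) ^ (v2 m + 1) ∣ m := by
  haveI : Fact (Nat.Prime 2) := ⟨Nat.prime_two⟩
  intro h
  rw [show (2:ℤ) = ((2:ℕ):ℤ) by norm_num, padicValInt_dvd_iff] at h
  rcases h with h | h
  · exact hm h
  · simp [v2] at h

lemma v2_pow_mul_odd (s : ℕ) {u : ℤ} (hu : Odd u) : v2 (2 ^ s * u) = s := by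
  haveI : Fact (Nat.Prime 2) := ⟨Nat.prime_two⟩
  have hu0 : u ≠ 0 := by rintro rfl; simp at hu
  have h2 : (2:ℤ)^s ≠ 0 := by positivity
  unfold v2
  rw [show (2:ℤ)^s = ((2:ℕ):ℤ)^s by norm_num, padicValInt.mul (by positivity) hu0]
  have h1 : padicValInt 2 (((2:ℕ):ℤ)^s) = s := by
    rw [show (((2:ℕ):ℤ))^s = (((2^s : ℕ)):ℤ) by push_cast; ring, padicValInt.of_nat,
      padicValNat.prime_pow]
  have h0 : padicValInt 2 u = 0 := by
    apply padicValInt.eq_zero_of_not_dvd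
    rw [two_cast, Int.two_dvd_ne_zero]
    exact Int.odd_iff.mp hu
  omega

lemma v2_decomp {m : ℤ} (hm : m ≠ 0) : ∃ u : ℤ, Odd u ∧ m = 2 ^ v2 m * u := by
  obtain ⟨c, hc⟩ := v2_dvd m
  refine ⟨c, ?_, hc⟩
  rcases Int.even_or_odd c with he | ho
  · exfalso
    obtain ⟨d, hd⟩ := he
    refine v2_not_dvd hm ⟨d, ?_⟩
    calc m = 2 ^ v2 m * c := hc
      _ = 2 ^ (v2 m + 1) * d := by rw [hd]; ring
  · exact ho

lemma minR_eq {R : ℕ →₀ ℕ} {s : ℕ} (hs : R s ≠ 0) (h : ∀ i < s, R i = 0) : minR R = s := by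
  apply le_antisymm (Nat.sInf_le hs)
  refine le_csInf ⟨s, hs⟩ fun i hi => ?_
  by_contra hlt
  exact hi (h i (by omega))

lemma minR_mem {R : ℕ →₀ ℕ} (hR : R ≠ 0) : R (minR R) ≠ 0 := by
  have : {i | R i ≠ 0}.Nonempty := by
    rcases Finsupp.ne_iff.mp hR with ⟨i, hi⟩
    exact ⟨i, by simpa using hi⟩
  exact Nat.sInf_mem this

lemma minR_lt {R : ℕ →₀ ℕ} {i : ℕ} (hi : i < minR R) : R i = 0 := by
  by_contra h
  have := Nat.sInf_le (show i ∈ {i | R i ≠ 0} from h)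
  simp only [minR] at hi
  omega

lemma le_v2_of_dvd {m : ℤ} {n : ℕ} (hm : m ≠ 0) (h : (2:ℤ) ^ n ∣ m) : n ≤ v2 m := by
  haveI : Fact (Nat.Prime 2) := ⟨Nat.prime_two⟩
  rw [show (2:ℤ) = ((2:ℕ):ℤ) by norm_num, padicValInt_dvd_iff] at h
  rcases h with h | h
  · exact absurd h hm
  · exact h

lemma sum_add_single (R : ℕ →₀ ℕ) (s : ℕ) :
    (R + Finsupp.single s 1).sum (fun i r => (r : ℤ) * (2 ^ i - 1))
      = R.sum (fun i r => (r : ℤ) * (2 ^ i - 1)) + (2 ^ s - 1) := by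
  rw [Finsupp.sum_add_index' (by simp) (by intros; push_cast; ring),
    Finsupp.sum_single_index (by simp)]
  simp

lemma mapsToS {x : (ℕ →₀ ℕ) × ℤ × ℤ} (hx : x ∈ S) :
    minR (Φ x).1 = v2 x.2.1 ∧ Φ x ∈ T ∧ Ψ (Φ x) = x := by
  obtain ⟨R, m, t⟩ := x
  obtain ⟨hm, hR⟩ := hx
  dsimp only at hm hR
  set s := v2 m with hs
  have hmin : minR (R + Finsupp.single s 1) = s := by
    apply minR_eq
    · simp
    · intro i hi
      simp only [Finsupp.add_apply, hR i hi, Finsupp.single_apply]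
      simp only [if_neg (by omega : ¬ s = i)]
      simp
  have hdvd : (2:ℤ) ^ (s + 1) ∣ m + 2 ^ s := by
    obtain ⟨u, hu, hmu⟩ := v2_decomp hm
    obtain ⟨k, hk⟩ := hu
    exact ⟨k + 1, by rw [hmu, hk]; ring⟩
  have hne : R + Finsupp.single s 1 ≠ 0 := by
    intro h
    have := DFunLike.congr_fun h s
    simp at this
  refine ⟨hmin, ⟨hne, by dsimp only [Φ]; rw [hmin]; exact hdvd⟩, ?_⟩
  simp only [Φ, Ψ, ← hs, hmin]
  refine Prod.ext ?_ (Prod.ext ?_ ?_) <;> simp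
  ring

lemma mapsToT {y : (ℕ →₀ ℕ) × ℤ × ℤ} (hy : y ∈ T) : Ψ y ∈ S ∧ Φ (Ψ y) = y := by
  obtain ⟨R, m, t⟩ := y
  obtain ⟨hR, hdvd⟩ := hy
  dsimp only at hR hdvd
  set s := minR R with hs
  have hRs : R s ≠ 0 := minR_mem hR
  obtain ⟨k, hk⟩ := hdvd
  have hm' : m - 2 ^ s = 2 ^ s * (2 * k - 1) := by rw [hk]; ring
  have hodd : Odd (2 * k - 1) := ⟨k - 1, by ring⟩
  have hv2 : v2 (m - 2 ^ s) = s := by rw [hm']; exact v2_pow_mul_odd s hodd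
  have hne : m - 2 ^ s ≠ 0 := by
    rw [hm']
    have : (2 * k - 1 : ℤ) ≠ 0 := by
      intro h; omega
    positivity
  have hmemS : (R - Finsupp.single s 1, m - 2 ^ s, t - 2 ^ (s + 1) + 1) ∈ S := by
    refine ⟨hne, fun i hi => ?_⟩
    rw [hv2] at hi
    rw [Finsupp.tsub_apply, minR_lt hi]
    simp
  refine ⟨hmemS, ?_⟩
  simp only [Φ, Ψ, ← hs, hv2]
  refine Prod.ext ?_ (Prod.ext ?_ ?_)
  · simp only
    exact tsub_add_cancel_of_le (Finsupp.single_le_iff.mpr (Nat.one_le_iff_ne_zero.mpr hRs))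
  · simp
  · simp; ring

theorem tate_spectral_sequence_BPR :
    -- (i) `S` and `T` are disjoint
    Disjoint S T ∧
    -- (ii) `S ∪ T` consists of all triples except those with `R = 0` and `m = 0`
    S ∪ T = {x : (ℕ →₀ ℕ) × ℤ × ℤ | ¬(x.1 = 0 ∧ x.2.1 = 0)} ∧
    -- (iii) `Φ` restricts to a bijection from `S` onto `T`, with inverse `Ψ`
    Set.BijOn Φ S T ∧
    (∀ x ∈ S, Ψ (Φ x) = x) ∧
    (∀ y ∈ T, Ψ y ∈ S ∧ Φ (Ψ y) = y) ∧
    -- (iv) `Φ` decreases the integer degree by exactly 1 and preserves `qdeg`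
    (∀ x : (ℕ →₀ ℕ) × ℤ × ℤ, x.2.1 ≠ 0 →
      deg (Φ x) = deg x - 1 ∧ qdeg (Φ x) = qdeg x) := by
  haveI : Fact (Nat.Prime 2) := ⟨Nat.prime_two⟩
  have hmapsΦ : Set.MapsTo Φ S T := fun x hx => (mapsToS hx).2.1
  have hmapsΨ : Set.MapsTo Ψ T S := fun y hy => (mapsToT hy).1
  refine ⟨?_, ?_, ?_, fun x hx => (mapsToS hx).2.2, fun y hy => mapsToT hy, ?_⟩
  · rw [Set.disjoint_left]
    rintro ⟨R, m, t⟩ ⟨hm, hS⟩ ⟨hR, hdvd⟩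
    dsimp only at hm hS hR hdvd
    have h1 : minR R + 1 ≤ v2 m := le_v2_of_dvd hm hdvd
    exact minR_mem hR (hS _ (by omega))
  · ext ⟨R, m, t⟩
    simp only [Set.mem_union, S, T, Set.mem_setOf_eq, not_and]
    constructor
    · rintro (⟨hm, _⟩ | ⟨hR, _⟩)
      · exact fun _ => hm
      · exact fun h => absurd h hR
    · intro h
      by_cases hm : m = 0
      · exact Or.inr ⟨fun h0 => h h0 hm, by simp [hm]⟩
      · by_cases hall : ∀ i < v2 m, R i = 0
        · exact Or.inl ⟨hm, hall⟩
        · push_neg at hall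
          obtain ⟨i, hi, hRi⟩ := hall
          have hR : R ≠ 0 := fun h0 => hRi (by simp [h0])
          have hle : minR R ≤ i := Nat.sInf_le hRi
          refine Or.inr ⟨hR, dvd_trans (pow_dvd_pow 2 (by omega)) (v2_dvd m)⟩
  · exact Set.InvOn.bijOn ⟨fun x hx => (mapsToS hx).2.2, fun y hy => (mapsToT hy).2⟩
      hmapsΦ hmapsΨ
  · rintro ⟨R, m, t⟩ hm
    constructor <;> simp [deg, qdeg, Φ, sum_add_single] <;> ring
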